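/- There exists a constant C > 0 such that for every k ∈ ℤ², ∑_{p ∈ ℤ²} 1/((1+|p+k|²)(1+|p|²)) ≤ C · log(2+|k|)/(1+|k|²). -/

import Mathlib

open scoped ENNReal

/-- Squared Euclidean norm on `ℤ²`. -/
noncomputable def nsq (p : ℤ × ℤ) : ℝ := (p.1 : ℝ) ^ 2 + (p.2 : ℝ) ^ 2

lemma nsq_nonneg (p : ℤ × ℤ) : 0 ≤ nsq p := by
  unfold nsq; positivity

/-- The majorant function. -/
noncomputable def phi (E t : ℝ) : ℝ := min (1 / (1 + t) ^ 2) (4 / (E * (1 + t)))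

lemma phi_nonneg {E t : ℝ} (hE : 0 < E) (ht : 0 ≤ t) : 0 ≤ phi E t := by
  apply le_min <;> positivity

lemma phi_anti {E s t : ℝ} (hE : 0 < E) (hs : 0 ≤ s) (hst : s ≤ t) :
    phi E t ≤ phi E s := by
  have h1 : (0:ℝ) < 1 + s := by linarith
  have h2 : (0:ℝ) < 1 + t := by linarith
  refine min_le_min ?_ ?_
  · apply div_le_div_of_nonneg_left (by norm_num) (by positivity)
    nlinarith
  · apply div_le_div_of_nonneg_left (by norm_num) (by positivity)
    nlinarith

/-- Pointwise bound: `1/(ab) ≤ φ(nsq p) + φ(nsq (p+k))` with `E = 1 + nsq k`. -/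
lemma pointwise (k p : ℤ × ℤ) :
    1 / ((1 + nsq (p + k)) * (1 + nsq p)) ≤
      phi (1 + nsq k) (nsq p) + phi (1 + nsq k) (nsq (p + k)) := by
  set A := nsq (p + k) with hA
  set B := nsq p with hB
  set K := nsq k with hK
  have hA0 : 0 ≤ A := nsq_nonneg _
  have hB0 : 0 ≤ B := nsq_nonneg _
  have hK0 : 0 ≤ K := nsq_nonneg _
  have hE : (0:ℝ) < 1 + K := by linarith
  have hpar : K ≤ 2 * (A + B) := by
    rw [hA, hB, hK]
    unfold nsq
    have e1 : ((p + k).1 : ℝ) = (p.1 : ℝ) + (k.1 : ℝ) := by push_cast [Prod.fst_add]; ring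
    have e2 : ((p + k).2 : ℝ) = (p.2 : ℝ) + (k.2 : ℝ) := by push_cast [Prod.snd_add]; ring
    rw [e1, e2]
    nlinarith [sq_nonneg (2 * (p.1:ℝ) + (k.1:ℝ)), sq_nonneg (2 * (p.2:ℝ) + (k.2:ℝ))]
  rcases le_total B A with hba | hab
  · have key : 1 / ((1 + A) * (1 + B)) ≤ phi (1 + K) B := by
      refine le_min ?_ ?_
      · rw [div_le_div_iff₀ (by nlinarith) (by positivity)]
        nlinarith
      · rw [div_le_div_iff₀ (by nlinarith) (by positivity)]
        nlinarith
    have := phi_nonneg (t := A) hE hA0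
    linarith
  · have key : 1 / ((1 + A) * (1 + B)) ≤ phi (1 + K) A := by
      refine le_min ?_ ?_
      · rw [div_le_div_iff₀ (by nlinarith) (by positivity)]
        nlinarith
      · rw [div_le_div_iff₀ (by nlinarith) (by positivity)]
        nlinarith
    have := phi_nonneg (t := B) hE hB0
    linarith

/-- Integers with equal absolute value and same sign are equal. -/
lemma int_eq_of_natAbs {x y : ℤ} (h1 : x.natAbs = y.natAbs) (h2 : (0 ≤ x) ↔ (0 ≤ y)) :
    x = y := by
  by_cases hx : 0 ≤ x
  · have := h2.mp hx; omega
  · have := fun h => hx (h2.mpr h); omega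

/-- Cardinality bound for the ℓ¹-sphere of radius `n` in `ℤ²`. -/
lemma fiber_bound (n : ℕ) (c : ℝ≥0∞) :
    ∑' _ : {q : ℤ × ℤ // q.1.natAbs + q.2.natAbs = n}, c ≤ (4 * ((n : ℝ≥0∞) + 1)) * c := by
  set ι : {q : ℤ × ℤ // q.1.natAbs + q.2.natAbs = n} → Bool × Bool × Fin (n + 1) :=
    fun q => ⟨decide (0 ≤ q.1.1), decide (0 ≤ q.1.2),
      ⟨q.1.1.natAbs, by have := q.2; omega⟩⟩ with hι
  have hinj : Function.Injective ι := by
    intro x y h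
    rw [hι] at h
    simp only [Prod.mk.injEq, Fin.mk.injEq, decide_eq_decide] at h
    obtain ⟨h1, h2, h3⟩ := h
    have hx := x.2
    have hy := y.2
    have e1 : x.1.1 = y.1.1 := int_eq_of_natAbs h3 h1
    have e2 : x.1.2 = y.1.2 := by
      refine int_eq_of_natAbs ?_ h2
      omega
    exact Subtype.ext (Prod.ext e1 e2)
  calc ∑' _ : {q : ℤ × ℤ // q.1.natAbs + q.2.natAbs = n}, c
      = ∑' x : {q : ℤ × ℤ // q.1.natAbs + q.2.natAbs = n},
          (fun _ : Bool × Bool × Fin (n + 1) => c) (ι x) := rfl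
    _ ≤ ∑' _ : Bool × Bool × Fin (n + 1), c :=
        ENNReal.tsum_comp_le_tsum_of_injective hinj _
    _ = (4 * ((n : ℝ≥0∞) + 1)) * c := by
        rw [tsum_fintype]
        simp only [Finset.sum_const, Finset.card_univ, Fintype.card_prod, Fintype.card_bool,
          Fintype.card_fin, nsmul_eq_mul]
        push_cast
        ring

/-- Telescoping bound in `ℝ≥0∞`. -/
lemma tsum_telescope_le (g : ℕ → ℝ) (hmono : ∀ m, g (m + 1) ≤ g m) (h0 : ∀ m, 0 ≤ g m) :
    ∑' j : ℕ, ENNReal.ofReal (g j - g (j + 1)) ≤ ENNReal.ofReal (g 0) := by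
  rw [ENNReal.tsum_eq_iSup_sum]
  refine iSup_le fun s => ?_
  obtain ⟨M, hM⟩ := s.exists_nat_subset_range
  calc ∑ j ∈ s, ENNReal.ofReal (g j - g (j + 1))
      ≤ ∑ j ∈ Finset.range M, ENNReal.ofReal (g j - g (j + 1)) :=
        Finset.sum_le_sum_of_subset hM
    _ = ENNReal.ofReal (∑ j ∈ Finset.range M, (g j - g (j + 1))) :=
        (ENNReal.ofReal_sum_of_nonneg fun i _ => by have := hmono i; linarith).symm
    _ = ENNReal.ofReal (g 0 - g M) := by rw [Finset.sum_range_sub' g M]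
    _ ≤ ENNReal.ofReal (g 0) := ENNReal.ofReal_le_ofReal (by have := h0 M; linarith)

/-- Splitting an `ℝ≥0∞` series at index `k`. -/
lemma ennreal_tsum_split (f : ℕ → ℝ≥0∞) (k : ℕ) :
    ∑' n, f n ≤ ∑ n ∈ Finset.range k, f n + ∑' i, f (i + k) := by
  set g : ℕ → ℝ≥0∞ := fun n => if n < k then f n else 0 with hg
  set h : ℕ → ℝ≥0∞ := fun n => if n < k then 0 else f n with hh
  have hfgh : ∀ n, f n = g n + h n := by
    intro n; rw [hg, hh]; by_cases hn : n < k <;> simp [hn]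
  have e1 : ∑' n, f n = ∑' n, g n + ∑' n, h n := by
    rw [← ENNReal.tsum_add]; exact tsum_congr hfgh
  have e2 : ∑' n, g n = ∑ n ∈ Finset.range k, f n := by
    rw [tsum_eq_sum (s := Finset.range k) (by
      intro b hb
      rw [hg]
      simp only [Finset.mem_range, not_lt] at hb
      simp [Nat.not_lt.mpr hb])]
    refine Finset.sum_congr rfl fun i hi => ?_
    rw [hg]; simp [Finset.mem_range.mp hi]
  have e3 : ∑' n, h n = ∑' i, h (i + k) := by
    refine (Function.Injective.tsum_eq (g := fun i => i + k) (add_left_injective k) ?_).symm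
    intro n hn
    simp only [hh, Function.mem_support] at hn
    by_cases hnk : n < k
    · simp [hnk] at hn
    · exact ⟨n - k, by show n - k + k = n; omega⟩
  have e4 : ∀ i, h (i + k) ≤ f (i + k) := by
    intro i; simp only [hh]; split <;> simp
  calc ∑' n, f n = ∑ n ∈ Finset.range k, f n + ∑' i, h (i + k) := by rw [e1, e2, e3]
    _ ≤ _ := by gcongr; exact e4 _

/-- Main bound for the radial series. -/
lemma series_bound (E : ℝ) (hE : 1 ≤ E) :
    ∑' n : ℕ, ENNReal.ofReal (4 * ((n : ℝ) + 1) * phi E ((n : ℝ) ^ 2 / 2)) ≤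
      ENNReal.ofReal (288 * Real.log (Real.sqrt E + 1) / E) := by
  have hE0 : (0:ℝ) < E := by linarith
  set N : ℕ := ⌈Real.sqrt E⌉₊ with hN
  have hsE1 : 1 ≤ Real.sqrt E := by
    rw [show (1:ℝ) = Real.sqrt 1 by simp]
    exact Real.sqrt_le_sqrt hE
  have hN1 : 1 ≤ N := by
    rw [hN]
    exact Nat.one_le_iff_ne_zero.mpr (by positivity)
  have hNR : Real.sqrt E ≤ (N : ℝ) := Nat.le_ceil _
  have hN2 : E ≤ (N : ℝ) ^ 2 := by
    nlinarith [Real.sq_sqrt (le_of_lt hE0)]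
  have hNup : (N : ℝ) ≤ Real.sqrt E + 1 := by
    rw [hN]
    exact le_of_lt (Nat.ceil_lt_add_one (by positivity))
  set f : ℕ → ℝ≥0∞ := fun n => ENNReal.ofReal (4 * ((n : ℝ) + 1) * phi E ((n : ℝ) ^ 2 / 2))
    with hf
  -- head estimate
  have head : ∑ n ∈ Finset.range (N + 1), f n ≤ ENNReal.ofReal ((80 + 64 * Real.log N) / E) := by
    have hterm : ∀ n ∈ Finset.range (N + 1), f n ≤
        ENNReal.ofReal (if n = 0 then 16 / E else 64 / (E * n)) := by
      intro n _
      rw [hf]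
      apply ENNReal.ofReal_le_ofReal
      rcases Nat.eq_zero_or_pos n with h0 | h1
      · subst h0
        simp only [Nat.cast_zero, if_pos rfl]
        have : phi E ((0:ℝ) ^ 2 / 2) ≤ 4 / (E * 1) := by
          have : phi E ((0:ℝ)^2/2) ≤ 4 / (E * (1 + (0:ℝ)^2/2)) := min_le_right _ _
          simpa using this
        calc 4 * ((0:ℝ) + 1) * phi E ((0:ℝ)^2/2) ≤ 4 * (4 / (E * 1)) := by
              have h0' := phi_nonneg (t := (0:ℝ)^2/2) hE0 (by norm_num)
              nlinarith
          _ = 16 / E := by field_simp; norm_num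
      · have hn0 : n ≠ 0 := by omega
        rw [if_neg hn0]
        have hn1 : (1:ℝ) ≤ (n:ℝ) := by exact_mod_cast h1
        have hphi : phi E ((n:ℝ)^2/2) ≤ 8 / (E * (n:ℝ)^2) := by
          refine le_trans (min_le_right _ _) ?_
          rw [div_le_div_iff₀ (by positivity) (by positivity)]
          nlinarith
        have hden : (0:ℝ) < E * (n:ℝ)^2 := by positivity
        calc 4 * ((n:ℝ) + 1) * phi E ((n:ℝ)^2/2)
            ≤ 8 * (n:ℝ) * (8 / (E * (n:ℝ)^2)) := by
              have h0' := phi_nonneg (t := (n:ℝ)^2/2) hE0 (by positivity)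
              nlinarith
          _ = 64 / (E * n) := by field_simp; ring
    calc ∑ n ∈ Finset.range (N + 1), f n
        ≤ ∑ n ∈ Finset.range (N + 1),
            ENNReal.ofReal (if n = 0 then 16 / E else 64 / (E * n)) :=
          Finset.sum_le_sum hterm
      _ = ENNReal.ofReal (∑ n ∈ Finset.range (N + 1),
            (if n = 0 then 16 / E else 64 / (E * (n:ℝ)))) := by
          rw [ENNReal.ofReal_sum_of_nonneg]
          intro i _
          split <;> positivity
      _ ≤ ENNReal.ofReal ((80 + 64 * Real.log N) / E) := by
          apply ENNReal.ofReal_le_ofReal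
          rw [Finset.sum_range_succ']
          have hsum : (∑ i ∈ Finset.range N,
              (if i + 1 = 0 then 16 / E else 64 / (E * ((i + 1 : ℕ) : ℝ))))
              = (64 / E) * (harmonic N : ℝ) := by
            rw [show ((harmonic N : ℝ)) = ∑ i ∈ Finset.range N, ((i:ℝ) + 1)⁻¹ by
              rw [harmonic]; push_cast; rfl]
            rw [Finset.mul_sum]
            refine Finset.sum_congr rfl fun i _ => ?_
            rw [if_neg (by omega)]
            push_cast
            field_simp
          rw [hsum, if_pos rfl]
          have hhar : (harmonic N : ℝ) ≤ 1 + Real.log N := harmonic_le_one_add_log N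
          have h64 : (0:ℝ) ≤ 64 / E := by positivity
          have hmul : (64 / E) * (harmonic N : ℝ) ≤ (64 / E) * (1 + Real.log N) :=
            mul_le_mul_of_nonneg_left hhar h64
          have expand : (80 + 64 * Real.log N) / E = 64 / E * (1 + Real.log N) + 16 / E := by
            field_simp; ring
          rw [expand]
          linarith
  -- tail estimate
  have tail : ∑' i : ℕ, f (i + (N + 1)) ≤ ENNReal.ofReal (32 / E) := by
    have hstep : ∀ i : ℕ, f (i + (N + 1)) ≤
        ENNReal.ofReal ((32 / (N:ℝ)) * (1 / ((N:ℝ) + i) - 1 / ((N:ℝ) + (i + 1)))) := by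
      intro i
      rw [hf]
      apply ENNReal.ofReal_le_ofReal
      set n : ℝ := ((i + (N + 1) : ℕ) : ℝ) with hn
      have hnval : n = (N:ℝ) + i + 1 := by rw [hn]; push_cast; ring
      have hNpos : (1:ℝ) ≤ (N:ℝ) := by exact_mod_cast hN1
      have hi0 : (0:ℝ) ≤ (i:ℝ) := Nat.cast_nonneg i
      have hn2 : (2:ℝ) ≤ n := by rw [hnval]; linarith
      have hphi : phi E (n ^ 2 / 2) ≤ 4 / n ^ 4 := by
        refine le_trans (min_le_left _ _) ?_
        rw [div_le_div_iff₀ (by positivity) (by positivity)]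
        nlinarith
      have hterm : 4 * (n + 1) * phi E (n ^ 2 / 2) ≤ 32 / n ^ 3 := by
        have h0' := phi_nonneg (t := n^2/2) hE0 (by positivity)
        calc 4 * (n + 1) * phi E (n ^ 2 / 2) ≤ 8 * n * (4 / n ^ 4) := by nlinarith
          _ = 32 / n ^ 3 := by field_simp; ring
      refine hterm.trans ?_
      have hNi : (0:ℝ) < (N:ℝ) + i := by positivity
      have hNi1 : (0:ℝ) < (N:ℝ) + ((i:ℝ) + 1) := by positivity
      have htele : 1 / ((N:ℝ) + i) - 1 / ((N:ℝ) + (i + 1)) =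
          1 / (((N:ℝ) + i) * ((N:ℝ) + i + 1)) := by
        rw [div_sub_div _ _ (ne_of_gt hNi) (ne_of_gt hNi1)]
        congr 1 <;> ring
      rw [htele, hnval, mul_one_div, div_div]
      rw [div_le_div_iff₀ (by positivity) (by positivity)]
      nlinarith [mul_nonneg hi0 (sq_nonneg ((N:ℝ) + (i:ℝ))),
        mul_nonneg (by linarith : (0:ℝ) ≤ 2 * (N:ℝ) + 3 * (i:ℝ))
          (by positivity : (0:ℝ) ≤ (N:ℝ) + (i:ℝ))]
    calc ∑' i : ℕ, f (i + (N + 1))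
        ≤ ∑' i : ℕ, ENNReal.ofReal
            ((32 / (N:ℝ)) * (1 / ((N:ℝ) + i) - 1 / ((N:ℝ) + (i + 1)))) :=
          ENNReal.tsum_le_tsum hstep
      _ ≤ ENNReal.ofReal ((32 / (N:ℝ)) * (1 / ((N:ℝ) + ((0:ℕ):ℝ)))) := by
          have hNpos : (0:ℝ) < (N:ℝ) := by exact_mod_cast hN1
          have htel := tsum_telescope_le (fun m : ℕ => (32 / (N:ℝ)) * (1 / ((N:ℝ) + m)))
            (fun m => by
              have h1 : (0:ℝ) < (N:ℝ) + m := by positivity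
              refine mul_le_mul_of_nonneg_left ?_ (by positivity)
              refine one_div_le_one_div_of_le h1 ?_
              push_cast; linarith)
            (fun m => by positivity)
          refine le_trans (le_of_eq ?_) htel
          refine tsum_congr fun j => ?_
          congr 1
          push_cast
          ring
      _ ≤ ENNReal.ofReal (32 / E) := by
          apply ENNReal.ofReal_le_ofReal
          have hNpos : (0:ℝ) < (N:ℝ) := by exact_mod_cast hN1
          rw [Nat.cast_zero, add_zero, mul_one_div, div_div]
          rw [div_le_div_iff₀ (by positivity) hE0]
          nlinarith
  -- combine
  have hlogN : Real.log N ≤ Real.log (Real.sqrt E + 1) := by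
    apply Real.log_le_log (by exact_mod_cast hN1) hNup
  have hL : (1:ℝ) / 2 ≤ Real.log (Real.sqrt E + 1) := by
    have h2 : (2:ℝ) ≤ Real.sqrt E + 1 := by linarith
    have := Real.log_le_log (by norm_num : (0:ℝ) < 2) h2
    have hl2 : (0.6931471803 : ℝ) < Real.log 2 := Real.log_two_gt_d9
    linarith
  calc ∑' n : ℕ, f n ≤ ∑ n ∈ Finset.range (N + 1), f n + ∑' i, f (i + (N + 1)) :=
        ennreal_tsum_split f (N + 1)
    _ ≤ ENNReal.ofReal ((80 + 64 * Real.log N) / E) + ENNReal.ofReal (32 / E) :=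
        add_le_add head tail
    _ = ENNReal.ofReal ((80 + 64 * Real.log N) / E + 32 / E) := by
        rw [ENNReal.ofReal_add]
        · have h0 : (0:ℝ) ≤ Real.log N := Real.log_natCast_nonneg N
          positivity
        · positivity
    _ ≤ ENNReal.ofReal (288 * Real.log (Real.sqrt E + 1) / E) := by
        apply ENNReal.ofReal_le_ofReal
        rw [← add_div, div_le_div_iff₀ hE0 hE0]
        have h0 : (0:ℝ) ≤ Real.log N := Real.log_natCast_nonneg N
        nlinarith
  -- done

/-- Lattice sum of the majorant. -/
lemma sum_phi_bound (E : ℝ) (hE : 1 ≤ E) :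
    ∑' q : ℤ × ℤ, ENNReal.ofReal (phi E (nsq q)) ≤
      ENNReal.ofReal (288 * Real.log (Real.sqrt E + 1) / E) := by
  have hE0 : (0:ℝ) < E := by linarith
  set F : ℤ × ℤ → ℝ≥0∞ := fun q => ENNReal.ofReal (phi E (nsq q)) with hF
  have step1 : ∑' q : ℤ × ℤ, F q =
      ∑' n : ℕ, ∑' q : {q : ℤ × ℤ // q.1.natAbs + q.2.natAbs = n}, F q := by
    rw [← (Equiv.sigmaFiberEquiv (fun q : ℤ × ℤ => q.1.natAbs + q.2.natAbs)).tsum_eq F]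
    exact ENNReal.tsum_sigma' _
  have step2 : ∀ n : ℕ, ∑' q : {q : ℤ × ℤ // q.1.natAbs + q.2.natAbs = n}, F q ≤
      (4 * ((n : ℝ≥0∞) + 1)) * ENNReal.ofReal (phi E ((n : ℝ) ^ 2 / 2)) := by
    intro n
    have hpt : ∀ q : {q : ℤ × ℤ // q.1.natAbs + q.2.natAbs = n},
        F q ≤ ENNReal.ofReal (phi E ((n : ℝ) ^ 2 / 2)) := by
      intro q
      rw [hF]
      apply ENNReal.ofReal_le_ofReal
      apply phi_anti hE0 (by positivity)
      have hq := q.2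
      have h1 : ((q.1.1.natAbs : ℝ)) = |((q.1.1 : ℤ) : ℝ)| := by
        simp [Nat.cast_natAbs]
      have h2 : ((q.1.2.natAbs : ℝ)) = |((q.1.2 : ℤ) : ℝ)| := by
        simp [Nat.cast_natAbs]
      have hq' : ((q.1.1.natAbs : ℝ) + (q.1.2.natAbs : ℝ)) = (n : ℝ) := by
        exact_mod_cast congrArg (fun m : ℕ => (m : ℝ)) hq
      have hcast : ((n : ℝ)) = |((q.1.1 : ℤ) : ℝ)| + |((q.1.2 : ℤ) : ℝ)| := by
        rw [← hq', h1, h2]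
      unfold nsq
      nlinarith [hcast, sq_nonneg (|((q.1.1 : ℤ) : ℝ)| - |((q.1.2 : ℤ) : ℝ)|),
        sq_abs ((q.1.1 : ℤ) : ℝ), sq_abs ((q.1.2 : ℤ) : ℝ),
        abs_nonneg ((q.1.1 : ℤ) : ℝ), abs_nonneg ((q.1.2 : ℤ) : ℝ)]
    calc ∑' q : {q : ℤ × ℤ // q.1.natAbs + q.2.natAbs = n}, F q
        ≤ ∑' _ : {q : ℤ × ℤ // q.1.natAbs + q.2.natAbs = n},
            ENNReal.ofReal (phi E ((n : ℝ) ^ 2 / 2)) := ENNReal.tsum_le_tsum hpt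
      _ ≤ (4 * ((n : ℝ≥0∞) + 1)) * ENNReal.ofReal (phi E ((n : ℝ) ^ 2 / 2)) :=
          fiber_bound n _
  have step3 : ∀ n : ℕ, (4 * ((n : ℝ≥0∞) + 1)) * ENNReal.ofReal (phi E ((n : ℝ) ^ 2 / 2)) =
      ENNReal.ofReal (4 * ((n : ℝ) + 1) * phi E ((n : ℝ) ^ 2 / 2)) := by
    intro n
    rw [show (4 * ((n : ℝ≥0∞) + 1)) = ENNReal.ofReal (4 * ((n:ℝ) + 1)) by
      rw [ENNReal.ofReal_mul (by norm_num), ENNReal.ofReal_add (by positivity) (by norm_num)]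
      simp [ENNReal.ofReal_natCast]]
    rw [← ENNReal.ofReal_mul (by positivity)]
  calc ∑' q : ℤ × ℤ, F q
      = ∑' n : ℕ, ∑' q : {q : ℤ × ℤ // q.1.natAbs + q.2.natAbs = n}, F q := step1
    _ ≤ ∑' n : ℕ, ENNReal.ofReal (4 * ((n : ℝ) + 1) * phi E ((n : ℝ) ^ 2 / 2)) := by
        refine ENNReal.tsum_le_tsum fun n => ?_
        rw [← step3 n]
        exact step2 n
    _ ≤ ENNReal.ofReal (288 * Real.log (Real.sqrt E + 1) / E) := series_bound E hE

/-- Logarithmically improved 2D convolution bound: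
`∑_{p ∈ ℤ²} 1/((1+|p+k|²)(1+|p|²)) ≤ C log(2+|k|)/(1+|k|²)`. -/
theorem lattice_convolution_log_bound :
    ∃ C : ℝ, 0 < C ∧ ∀ k : ℤ × ℤ,
      ∑' p : ℤ × ℤ,
        ENNReal.ofReal (1 / ((1 + nsq (p + k)) * (1 + nsq p))) ≤
      ENNReal.ofReal (C * Real.log (2 + Real.sqrt (nsq k)) / (1 + nsq k)) := by
  refine ⟨576, by norm_num, fun k => ?_⟩
  set K := nsq k with hK
  have hK0 : 0 ≤ K := nsq_nonneg k
  set E : ℝ := 1 + K with hE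
  have hE1 : (1:ℝ) ≤ E := by rw [hE]; linarith
  have hE0 : (0:ℝ) < E := by linarith
  have main := sum_phi_bound E hE1
  have htrans : ∑' p : ℤ × ℤ, ENNReal.ofReal (phi E (nsq (p + k))) =
      ∑' q : ℤ × ℤ, ENNReal.ofReal (phi E (nsq q)) :=
    (Equiv.addRight k).tsum_eq (fun q => ENNReal.ofReal (phi E (nsq q)))
  have step1 : ∑' p : ℤ × ℤ, ENNReal.ofReal (1 / ((1 + nsq (p + k)) * (1 + nsq p))) ≤
      ∑' p : ℤ × ℤ, (ENNReal.ofReal (phi E (nsq p)) + ENNReal.ofReal (phi E (nsq (p + k)))) := by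
    refine ENNReal.tsum_le_tsum fun p => ?_
    rw [← ENNReal.ofReal_add (phi_nonneg hE0 (nsq_nonneg p)) (phi_nonneg hE0 (nsq_nonneg _))]
    exact ENNReal.ofReal_le_ofReal (pointwise k p)
  have step2 : ∑' p : ℤ × ℤ,
      (ENNReal.ofReal (phi E (nsq p)) + ENNReal.ofReal (phi E (nsq (p + k)))) =
      ∑' p : ℤ × ℤ, ENNReal.ofReal (phi E (nsq p)) +
      ∑' p : ℤ × ℤ, ENNReal.ofReal (phi E (nsq (p + k))) := ENNReal.tsum_add
  have hsqrt : Real.sqrt E + 1 ≤ 2 + Real.sqrt K := by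
    have h1 : Real.sqrt E ≤ 1 + Real.sqrt K := by
      have h2 : E ≤ (1 + Real.sqrt K) ^ 2 := by
        have := Real.sq_sqrt hK0
        have := Real.sqrt_nonneg K
        nlinarith
      calc Real.sqrt E ≤ Real.sqrt ((1 + Real.sqrt K) ^ 2) := Real.sqrt_le_sqrt h2
        _ = 1 + Real.sqrt K := Real.sqrt_sq (by positivity)
    linarith
  have hlog : Real.log (Real.sqrt E + 1) ≤ Real.log (2 + Real.sqrt K) := by
    apply Real.log_le_log (by positivity) hsqrt
  have hlog0 : 0 ≤ Real.log (Real.sqrt E + 1) := by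
    apply Real.log_nonneg
    have := Real.sqrt_nonneg E
    linarith
  calc ∑' p : ℤ × ℤ, ENNReal.ofReal (1 / ((1 + nsq (p + k)) * (1 + nsq p)))
      ≤ ∑' p : ℤ × ℤ, ENNReal.ofReal (phi E (nsq p)) +
        ∑' p : ℤ × ℤ, ENNReal.ofReal (phi E (nsq (p + k))) := step1.trans (le_of_eq step2)
    _ = ∑' q : ℤ × ℤ, ENNReal.ofReal (phi E (nsq q)) +
        ∑' q : ℤ × ℤ, ENNReal.ofReal (phi E (nsq q)) := by rw [htrans]
    _ ≤ ENNReal.ofReal (288 * Real.log (Real.sqrt E + 1) / E) +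
        ENNReal.ofReal (288 * Real.log (Real.sqrt E + 1) / E) := add_le_add main main
    _ = ENNReal.ofReal (576 * Real.log (Real.sqrt E + 1) / E) := by
        rw [← ENNReal.ofReal_add (by positivity) (by positivity)]
        congr 1
        ring
    _ ≤ ENNReal.ofReal (576 * Real.log (2 + Real.sqrt K) / (1 + K)) := by
        apply ENNReal.ofReal_le_ofReal
        rw [← hE]
        gcongr
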